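/- For every fixed t ≥ 0, the map x ↦ f(x)(t) from D to ℝ^d is measurable with respect to the Kolmogorov σ-algebra on D and the Borel σ-algebra on ℝ^d; consequently the map f : D → D is measurable when D carries the Kolmogorov σ-algebra. -/

import Mathlib

open scoped NNReal ENNReal Classical
open Filter Topology

noncomputable section

/-- Left limit of `x` at `t`, with the convention `x(0−) = x(0)`. -/
def leftLimit {d : ℕ} (x : ℝ≥0 → Fin d → ℝ) (t : ℝ≥0) : Fin d → ℝ :=
  if 0 < t then limUnder (nhdsWithin t (Set.Iio t)) x else x 0

/-- `x : [0,∞) → ℝ^d` is càdlàg: right-continuous everywhere, with left limits at every `t > 0`. -/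
def IsCadlag {d : ℕ} (x : ℝ≥0 → Fin d → ℝ) : Prop :=
  (∀ t : ℝ≥0, ContinuousWithinAt x (Set.Ici t) t) ∧
  (∀ t : ℝ≥0, 0 < t →
    ∃ L : Fin d → ℝ, Filter.Tendsto x (nhdsWithin t (Set.Iio t)) (nhds L))

/-- `x` is constant on the set `I`. -/
def ConstOn {d : ℕ} (x : ℝ≥0 → Fin d → ℝ) (I : Set ℝ≥0) : Prop :=
  ∀ s ∈ I, ∀ s' ∈ I, x s = x s'

/-- `η_x(t) = sup {s ∈ [0,t) : x(s) ≠ x(t)}`, with the convention `sup ∅ = 0`. -/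
def eta {d : ℕ} (x : ℝ≥0 → Fin d → ℝ) (t : ℝ≥0) : ℝ≥0 :=
  sSup {s : ℝ≥0 | s < t ∧ x s ≠ x t}

/-- The set of discontinuity points of `x`: the `t > 0` where `x(t) ≠ x(t−)`. -/
def disc {d : ℕ} (x : ℝ≥0 → Fin d → ℝ) : Set ℝ≥0 :=
  {t : ℝ≥0 | 0 < t ∧ x t ≠ leftLimit x t}

/-- `θ_x(t) = inf {s ≥ t : x(s) ≠ x(t−)} ∈ [0,∞]`, with the convention `inf ∅ = ∞`. -/
def theta {d : ℕ} (x : ℝ≥0 → Fin d → ℝ) (t : ℝ≥0) : ℝ≥0∞ :=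
  sInf ((fun s : ℝ≥0 => (s : ℝ≥0∞)) '' {s : ℝ≥0 | t ≤ s ∧ x s ≠ leftLimit x t})

/-- The map `f` replacing each "stair" of `x` by the linear interpolation of its endpoints:
`f(x)(t) = x(η_x(t)) + ((t − η_x(t))/(θ_x(t) − η_x(t))) • (x(θ_x(t)) − x(η_x(t)))`,
with `f(x)(t) = x(t)` when `θ_x(t) = η_x(t)` or `θ_x(t) = ∞`. -/
def fmap {d : ℕ} (x : ℝ≥0 → Fin d → ℝ) : ℝ≥0 → Fin d → ℝ := fun t =>
  if theta x t = ((eta x t : ℝ≥0) : ℝ≥0∞) ∨ theta x t = ⊤ then x t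
  else x (eta x t) +
    (((t : ℝ) - (eta x t : ℝ)) / ((theta x t).toReal - (eta x t : ℝ))) •
      (x (theta x t).toNNReal - x (eta x t))

/-- The space `D` of càdlàg functions `[0,∞) → ℝ^d`. -/
def Cadlag (d : ℕ) : Type := {x : ℝ≥0 → Fin d → ℝ // IsCadlag x}

/-- The Kolmogorov σ-algebra on `D`: the trace of the σ-algebra generated by the coordinate
evaluation maps `x ↦ x(t)`, `t ≥ 0` (i.e. of the product σ-algebra). -/
instance (d : ℕ) : MeasurableSpace (Cadlag d) :=
  MeasurableSpace.comap (fun x : Cadlag d => x.1)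
    (inferInstance : MeasurableSpace (ℝ≥0 → Fin d → ℝ))

namespace FmapAux

/-- A dense sequence in `ℝ≥0`. -/
def Tn : ℕ → ℝ≥0 := TopologicalSpace.denseSeq ℝ≥0

lemma exists_Tn_mem {a b : ℝ≥0} (h : a < b) : ∃ n, Tn n ∈ Set.Ioo a b := by
  obtain ⟨n, hn⟩ := (TopologicalSpace.denseRange_denseSeq ℝ≥0).exists_mem_open isOpen_Ioo
    (Set.nonempty_Ioo.2 h)
  exact ⟨n, hn⟩

lemma exists_Tn_right {d : ℕ} {x : ℝ≥0 → Fin d → ℝ} (hx : IsCadlag x) {s b : ℝ≥0}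
    (hsb : s < b) {v : Fin d → ℝ} (hv : x s ≠ v) :
    ∃ n, Tn n ∈ Set.Ioo s b ∧ x (Tn n) ≠ v := by
  have hev : {u : ℝ≥0 | x u ≠ v} ∈ 𝓝[≥] s :=
    (hx.1 s).eventually (isOpen_ne.eventually_mem hv)
  rw [mem_nhdsGE_iff_exists_mem_Ioc_Ico_subset hsb] at hev
  obtain ⟨c, hc, hsub⟩ := hev
  obtain ⟨n, hn⟩ := exists_Tn_mem hc.1
  exact ⟨n, ⟨hn.1, lt_of_lt_of_le hn.2 hc.2⟩, hsub ⟨hn.1.le, hn.2⟩⟩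

end FmapAux

namespace FmapAux

/-- Countable supremum representation of `eta`. -/
def etaE {d : ℕ} (x : ℝ≥0 → Fin d → ℝ) (t : ℝ≥0) : ℝ≥0∞ :=
  ⨆ n, if Tn n < t ∧ x (Tn n) ≠ x t then ((Tn n : ℝ≥0) : ℝ≥0∞) else 0

lemma etaE_le {d : ℕ} (x : ℝ≥0 → Fin d → ℝ) (t : ℝ≥0) : etaE x t ≤ (t : ℝ≥0∞) := by
  refine iSup_le fun n => ?_
  split_ifs with h
  · exact_mod_cast h.1.le
  · exact zero_le

lemma coe_eta {d : ℕ} {x : ℝ≥0 → Fin d → ℝ} (hx : IsCadlag x) (t : ℝ≥0) :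
    ((eta x t : ℝ≥0) : ℝ≥0∞) = etaE x t := by
  have hne : etaE x t ≠ ⊤ := (lt_of_le_of_lt (etaE_le x t) ENNReal.coe_lt_top).ne
  apply le_antisymm
  · rw [← ENNReal.coe_toNNReal hne, ENNReal.coe_le_coe]
    rcases Set.eq_empty_or_nonempty {s : ℝ≥0 | s < t ∧ x s ≠ x t} with hS | hS
    · simp [eta, hS]
    · refine csSup_le hS fun s hs => ?_
      obtain ⟨n, hn, hnv⟩ := exists_Tn_right hx hs.1 hs.2
      have h1 : ((Tn n : ℝ≥0) : ℝ≥0∞) ≤ etaE x t := by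
        refine le_trans ?_ (le_iSup _ n)
        rw [if_pos ⟨hn.2, hnv⟩]
      have h2 : (Tn n : ℝ≥0) ≤ (etaE x t).toNNReal := by
        rwa [← ENNReal.coe_le_coe, ENNReal.coe_toNNReal hne]
      exact le_trans hn.1.le h2
  · refine iSup_le fun n => ?_
    split_ifs with h
    · exact ENNReal.coe_le_coe.2 (le_csSup ⟨t, fun s hs => hs.1.le⟩ h)
    · exact zero_le

/-- Countable infimum representation of `theta`. -/
def thetaE {d : ℕ} (x : ℝ≥0 → Fin d → ℝ) (t : ℝ≥0) : ℝ≥0∞ :=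
  ⨅ n, if t ≤ Tn n ∧ x (Tn n) ≠ leftLimit x t then ((Tn n : ℝ≥0) : ℝ≥0∞) else ⊤

lemma theta_eq {d : ℕ} {x : ℝ≥0 → Fin d → ℝ} (hx : IsCadlag x) (t : ℝ≥0) :
    theta x t = thetaE x t := by
  apply le_antisymm
  · refine le_iInf fun n => ?_
    split_ifs with h
    · exact sInf_le ⟨Tn n, h, rfl⟩
    · exact le_top
  · refine le_sInf fun e he => ?_
    obtain ⟨s, hs, rfl⟩ := he
    refine ENNReal.le_of_forall_pos_le_add fun ε hε _ => ?_
    obtain ⟨n, hn, hnv⟩ := exists_Tn_right hx (lt_add_of_pos_right s hε) hs.2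
    calc thetaE x t ≤ _ := iInf_le _ n
      _ ≤ (s : ℝ≥0∞) + ε := by
        rw [if_pos ⟨le_trans hs.1 hn.1.le, hnv⟩, ← ENNReal.coe_add, ENNReal.coe_le_coe]
        exact hn.2.le

lemma leftLimit_tendsto {d : ℕ} {x : ℝ≥0 → Fin d → ℝ} (hx : IsCadlag x) (t : ℝ≥0) :
    Tendsto (fun n : ℕ => x (t - t / ((n : ℝ≥0) + 1))) atTop (𝓝 (leftLimit x t)) := by
  rcases eq_zero_or_pos t with rfl | ht
  · simp only [leftLimit, lt_irrefl, if_neg, zero_tsub]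
    simpa using (tendsto_const_nhds : Tendsto (fun _ : ℕ => x 0) atTop (𝓝 (x 0)))
  · obtain ⟨L, hL⟩ := hx.2 t ht
    have hne : (𝓝[<] t).NeBot := nhdsWithin_Iio_self_neBot' ⟨0, ht⟩
    have hLL : leftLimit x t = L := by rw [leftLimit, if_pos ht]; exact hL.limUnder_eq
    rw [hLL]
    refine hL.comp (tendsto_nhdsWithin_of_tendsto_nhds_of_eventually_within _ ?_ ?_)
    · have h0 : Tendsto (fun n : ℕ => t / ((n : ℝ≥0) + 1)) atTop (𝓝 0) := by
        have := (tendsto_const_div_atTop_nhds_zero_nat t).comp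
          (tendsto_add_atTop_nat 1)
        refine Tendsto.congr (fun n => ?_) this
        simp only [Function.comp_apply]
        push_cast
        ring_nf
      have := Tendsto.sub (tendsto_const_nhds : Tendsto (fun _ : ℕ => t) atTop (𝓝 t)) h0
      simpa using this
    · refine Filter.Eventually.of_forall fun n => ?_
      have hpos : (0 : ℝ≥0) < t / ((n : ℝ≥0) + 1) := by positivity
      exact tsub_lt_self ht hpos

end FmapAux

namespace FmapAux

lemma meas_val (d : ℕ) : Measurable fun x : Cadlag d => x.1 :=
  Measurable.of_comap_le le_rfl

lemma meas_eval (d : ℕ) (s : ℝ≥0) : Measurable fun x : Cadlag d => x.1 s :=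
  (measurable_pi_apply s).comp (meas_val d)

lemma meas_leftLimit (d : ℕ) (t : ℝ≥0) :
    Measurable fun x : Cadlag d => leftLimit x.1 t := by
  refine measurable_of_tendsto_metrizable' (atTop : Filter ℕ)
    (f := fun n : ℕ => fun x : Cadlag d => x.1 (t - t / ((n : ℝ≥0) + 1)))
    (fun n => meas_eval d _) ?_
  rw [tendsto_pi_nhds]
  exact fun x => leftLimit_tendsto x.2 t

lemma measSet_and (d : ℕ) (p : Prop) {f g : Cadlag d → Fin d → ℝ}
    (hf : Measurable f) (hg : Measurable g) :
    MeasurableSet {x : Cadlag d | p ∧ f x ≠ g x} := by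
  by_cases h : p
  · simp only [h, true_and]
    exact (measurableSet_eq_fun hf hg).compl
  · simp only [h, false_and, Set.setOf_false]
    exact MeasurableSet.empty

lemma meas_etaE (d : ℕ) (t : ℝ≥0) : Measurable fun x : Cadlag d => etaE x.1 t := by
  refine Measurable.iSup fun n => ?_
  exact Measurable.ite (measSet_and d _ (meas_eval d _) (meas_eval d t))
    measurable_const measurable_const

lemma meas_eta (d : ℕ) (t : ℝ≥0) : Measurable fun x : Cadlag d => eta x.1 t := by
  have h : (fun x : Cadlag d => eta x.1 t) = fun x => (etaE x.1 t).toNNReal := by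
    funext x; rw [← coe_eta x.2 t, ENNReal.toNNReal_coe]
  rw [h]
  exact ENNReal.measurable_toNNReal.comp (meas_etaE d t)

lemma meas_theta (d : ℕ) (t : ℝ≥0) : Measurable fun x : Cadlag d => theta x.1 t := by
  have h : (fun x : Cadlag d => theta x.1 t) = fun x => thetaE x.1 t :=
    funext fun x => theta_eq x.2 t
  rw [h]
  refine Measurable.iInf fun n => ?_
  exact Measurable.ite (measSet_and d _ (meas_eval d _) (meas_leftLimit d t))
    measurable_const measurable_const

lemma meas_comp_countable {α β γ : Type*} [MeasurableSpace α] [MeasurableSpace β]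
    [MeasurableSpace γ] [MeasurableSingletonClass β] {u : α → β} (hu : Measurable u)
    (hc : (Set.range u).Countable) {f : α → β → γ} (hf : ∀ b, Measurable fun a => f a b) :
    Measurable fun a => f a (u a) := by
  intro s hs
  have heq : (fun a => f a (u a)) ⁻¹' s
      = ⋃ b ∈ Set.range u, (u ⁻¹' {b} ∩ (fun a => f a b) ⁻¹' s) := by
    ext a
    simp only [Set.mem_preimage, Set.mem_iUnion, Set.mem_inter_iff, Set.mem_singleton_iff,
      Set.mem_range, exists_prop]
    constructor
    · intro h; exact ⟨u a, ⟨a, rfl⟩, rfl, h⟩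
    · rintro ⟨b, _, rfl, h⟩; exact h
  rw [heq]
  exact MeasurableSet.biUnion hc fun b _ => (hu (measurableSet_singleton b)).inter (hf b hs)

/-- Dyadic approximation from above. -/
def gdy (n : ℕ) (s : ℝ≥0) : ℝ≥0 := (⌈(s : ℝ) * 2 ^ n⌉₊ : ℝ≥0) / 2 ^ n

lemma gdy_coe (n : ℕ) (s : ℝ≥0) : ((gdy n s : ℝ≥0) : ℝ) = (⌈(s : ℝ) * 2 ^ n⌉₊ : ℝ) / 2 ^ n := by
  simp [gdy, NNReal.coe_div]

lemma gdy_mono (n : ℕ) : Monotone (gdy n) := by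
  intro a b hab
  rw [← NNReal.coe_le_coe, gdy_coe, gdy_coe]
  gcongr

lemma gdy_ge (n : ℕ) (s : ℝ≥0) : s ≤ gdy n s := by
  rw [← NNReal.coe_le_coe, gdy_coe, le_div_iff₀ (by positivity : (0:ℝ) < 2 ^ n)]
  exact Nat.le_ceil _

lemma gdy_le (n : ℕ) (s : ℝ≥0) : ((gdy n s : ℝ≥0) : ℝ) ≤ (s : ℝ) + (1 / 2) ^ n := by
  rw [gdy_coe, div_le_iff₀ (by positivity : (0:ℝ) < 2 ^ n)]
  have h1 : (⌈(s : ℝ) * 2 ^ n⌉₊ : ℝ) < (s : ℝ) * 2 ^ n + 1 :=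
    Nat.ceil_lt_add_one (by positivity)
  have h2 : ((s : ℝ) + (1 / 2) ^ n) * 2 ^ n = (s : ℝ) * 2 ^ n + 1 := by
    rw [add_mul, ← mul_pow]; norm_num
  rw [h2]
  exact h1.le

lemma gdy_tendsto (s : ℝ≥0) : Tendsto (fun n => gdy n s) atTop (𝓝 s) := by
  rw [← NNReal.tendsto_coe]
  refine tendsto_of_tendsto_of_tendsto_of_le_of_le
    (tendsto_const_nhds : Tendsto (fun _ : ℕ => (s : ℝ)) atTop (𝓝 (s : ℝ))) ?_
    (fun n => NNReal.coe_le_coe.2 (gdy_ge n s)) (fun n => gdy_le n s)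
  have := (tendsto_const_nhds : Tendsto (fun _ : ℕ => (s : ℝ)) atTop (𝓝 (s : ℝ))).add
    (tendsto_pow_atTop_nhds_zero_of_lt_one (by norm_num : (0:ℝ) ≤ 1/2) (by norm_num))
  simpa using this

lemma gdy_range_countable (n : ℕ) : (Set.range (gdy n)).Countable := by
  have h : Set.range (gdy n) ⊆ Set.range (fun k : ℕ => (k : ℝ≥0) / 2 ^ n) := by
    rintro _ ⟨s, rfl⟩; exact ⟨⌈(s : ℝ) * 2 ^ n⌉₊, rfl⟩
  exact (Set.countable_range _).mono h

lemma meas_eval_comp {d : ℕ} {σ : Cadlag d → ℝ≥0} (hσ : Measurable σ) :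
    Measurable fun x : Cadlag d => x.1 (σ x) := by
  refine measurable_of_tendsto_metrizable' (atTop : Filter ℕ)
    (f := fun n => fun x : Cadlag d => x.1 (gdy n (σ x))) (fun n => ?_) ?_
  · exact meas_comp_countable ((gdy_mono n).measurable.comp hσ)
      ((gdy_range_countable n).mono (by rintro _ ⟨x, rfl⟩; exact ⟨σ x, rfl⟩))
      (fun b => meas_eval d b)
  · rw [tendsto_pi_nhds]
    intro x
    have h1 : Tendsto (fun n => gdy n (σ x)) atTop (𝓝[≥] (σ x)) :=
      tendsto_nhdsWithin_of_tendsto_nhds_of_eventually_within _ (gdy_tendsto (σ x))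
        (Filter.Eventually.of_forall fun n => gdy_ge n (σ x))
    exact Filter.Tendsto.comp (x.2.1 (σ x)) h1

end FmapAux

/-- For every fixed `t ≥ 0`, the map `x ↦ f(x)(t)` is measurable from `D` (with the Kolmogorov
σ-algebra) to `ℝ^d`; consequently `f` is measurable as a map into the space of functions
`[0,∞) → ℝ^d` carrying the Kolmogorov σ-algebra. -/
theorem measurable_fmap (d : ℕ) (hd : 1 ≤ d) :
    (∀ t : ℝ≥0, Measurable (fun x : Cadlag d => fmap x.1 t)) ∧
    Measurable (fun x : Cadlag d => fmap x.1) := by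
  have key : ∀ t : ℝ≥0, Measurable fun x : Cadlag d => fmap x.1 t := by
    intro t
    have hθ := FmapAux.meas_theta d t
    have hη := FmapAux.meas_eta d t
    have hηE : Measurable fun x : Cadlag d => ((eta x.1 t : ℝ≥0) : ℝ≥0∞) :=
      measurable_coe_nnreal_ennreal.comp hη
    have hcond : MeasurableSet {x : Cadlag d |
        theta x.1 t = ((eta x.1 t : ℝ≥0) : ℝ≥0∞) ∨ theta x.1 t = ⊤} := by
      have h1 : MeasurableSet {x : Cadlag d | theta x.1 t = ((eta x.1 t : ℝ≥0) : ℝ≥0∞)} := by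
        have heq : {x : Cadlag d | theta x.1 t = ((eta x.1 t : ℝ≥0) : ℝ≥0∞)}
            = {x : Cadlag d | theta x.1 t ≤ ((eta x.1 t : ℝ≥0) : ℝ≥0∞)}
              ∩ {x : Cadlag d | ((eta x.1 t : ℝ≥0) : ℝ≥0∞) ≤ theta x.1 t} := by
          ext x; simp [le_antisymm_iff]
        rw [heq]
        exact (measurableSet_le hθ hηE).inter (measurableSet_le hηE hθ)
      have h2 : MeasurableSet {x : Cadlag d | theta x.1 t = ⊤} :=
        hθ (measurableSet_singleton ⊤)
      exact h1.union h2
    have e1 : Measurable fun x : Cadlag d => x.1 (eta x.1 t) := FmapAux.meas_eval_comp hη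
    have e2 : Measurable fun x : Cadlag d => x.1 (theta x.1 t).toNNReal :=
      FmapAux.meas_eval_comp (ENNReal.measurable_toNNReal.comp hθ)
    have hc : Measurable fun x : Cadlag d =>
        ((t : ℝ) - ((eta x.1 t : ℝ≥0) : ℝ)) /
          ((theta x.1 t).toReal - ((eta x.1 t : ℝ≥0) : ℝ)) := by
      have hηr : Measurable fun x : Cadlag d => ((eta x.1 t : ℝ≥0) : ℝ) :=
        measurable_coe_nnreal_real.comp hη
      exact (measurable_const.sub hηr).div ((ENNReal.measurable_toReal.comp hθ).sub hηr)
    have hB : Measurable fun x : Cadlag d =>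
        x.1 (eta x.1 t) +
          (((t : ℝ) - ((eta x.1 t : ℝ≥0) : ℝ)) /
            ((theta x.1 t).toReal - ((eta x.1 t : ℝ≥0) : ℝ))) •
            (x.1 (theta x.1 t).toNNReal - x.1 (eta x.1 t)) := by
      refine measurable_pi_lambda _ fun i => ?_
      simp only [Pi.add_apply, Pi.smul_apply, Pi.sub_apply, smul_eq_mul]
      exact ((measurable_pi_apply i).comp e1).add
        (hc.mul (((measurable_pi_apply i).comp e2).sub ((measurable_pi_apply i).comp e1)))
    simp only [fmap]
    exact Measurable.ite hcond (FmapAux.meas_eval d t) hB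
  exact ⟨key, measurable_pi_lambda _ fun t => key t⟩
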